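/- Let A ⊆ B be integral domains and suppose there exists f ∈ A such that A_f = B_f (as subrings of the fraction field of B) and fB ∩ A = fA. Then A = B. -/
import Mathlib


/-- Let `A ⊆ B` be integral domains and `f ∈ A` nonzero such that `A_f = B_f`
(every element of `B` lands in `A` after multiplying by a power of `f`) and
`fB ∩ A = fA`. Then `A = B`. -/
theorem stmt0 {B : Type*} [CommRing B] [IsDomain B] (A : Subring B) (f : B)
    (hfA : f ∈ A) (hf0 : f ≠ 0)
    (hloc : ∀ b : B, ∃ n : ℕ, f ^ n * b ∈ A)
    (hcap : ∀ a ∈ A, (∃ b : B, a = f * b) → ∃ a' ∈ A, a = f * a') :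
    A = ⊤ := by
  have key : ∀ n : ℕ, ∀ b : B, f ^ n * b ∈ A → b ∈ A := by
    intro n
    induction n with
    | zero => intro b hb; simpa using hb
    | succ n ih =>
      intro b hb
      obtain ⟨a', ha', heq⟩ := hcap (f ^ (n + 1) * b) hb
        ⟨f ^ n * b, by ring⟩
      have : f ^ n * b = a' := by
        apply mul_left_cancel₀ hf0
        rw [← heq]; ring
      exact ih b (this ▸ ha')
  ext b
  simp only [Subring.mem_top, iff_true]
  obtain ⟨n, hn⟩ := hloc b
  exact key n b hn
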